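/- For an orthogonal linear map L of a finite-dimensional real inner product space, the codimension of the fixed-point space of L is even if det L = 1 and odd if det L = -1. -/

import Mathlib

open Module

noncomputable section

lemma det_ne_zero_of_injective' {E : Type*} [NormedAddCommGroup E] [InnerProductSpace ℝ E]
    [FiniteDimensional ℝ E] (f : E →ₗ[ℝ] E) (h : Function.Injective f) :
    LinearMap.det f ≠ 0 :=
  (LinearEquiv.ofInjectiveEndo f h).isUnit_det'.ne_zero

lemma isometry_neg_one_pow_det_pos {E : Type*} [NormedAddCommGroup E] [InnerProductSpace ℝ E]
    [FiniteDimensional ℝ E] (T : E ≃ₗᵢ[ℝ] E) (hT : ∀ x, T x = x → x = 0) :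
    0 < (-1 : ℝ) ^ (finrank ℝ E) * LinearMap.det (T.toLinearEquiv : E →ₗ[ℝ] E) := by
  classical
  set n := finrank ℝ E with hn
  set Tm : E →ₗ[ℝ] E := (T.toLinearEquiv : E →ₗ[ℝ] E) with hTm
  have hTapp : ∀ x, Tm x = T x := fun x => rfl
  let b : Basis (Fin n) ℝ E := Module.finBasis ℝ E
  set A := LinearMap.toMatrix b b Tm with hA
  set p : ℝ → ℝ := fun t => (t • (1 : Matrix (Fin n) (Fin n) ℝ) - A).det with hp
  have hpc : Continuous p :=
    Continuous.matrix_det ((continuous_id.smul continuous_const).sub continuous_const)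
  have hplin : ∀ t : ℝ, p t = LinearMap.det (t • (LinearMap.id : E →ₗ[ℝ] E) - Tm) := by
    intro t
    rw [← LinearMap.det_toMatrix b, map_sub, map_smul, LinearMap.toMatrix_id, ← hA]
  have hinj : ∀ t : ℝ, 0 ≤ t → Function.Injective (t • (LinearMap.id : E →ₗ[ℝ] E) - Tm) := by
    intro t ht
    rw [← LinearMap.ker_eq_bot, LinearMap.ker_eq_bot']
    intro x hx
    simp only [LinearMap.sub_apply, LinearMap.smul_apply, LinearMap.id_apply, sub_eq_zero] at hx
    by_cases h1 : t = 1
    · subst h1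
      exact hT x (by rw [← hTapp, ← hx, one_smul])
    · by_contra hx0
      have hnorm : ‖Tm x‖ = ‖x‖ := by rw [hTapp]; exact T.norm_map x
      rw [← hx, norm_smul, Real.norm_eq_abs, abs_of_nonneg ht] at hnorm
      have h2 : (t - 1) * ‖x‖ = 0 := by linarith
      rcases mul_eq_zero.mp h2 with h | h
      · exact h1 (by linarith)
      · exact hx0 (norm_eq_zero.mp h)
  have hpne : ∀ t : ℝ, 0 ≤ t → p t ≠ 0 := fun t ht => by
    rw [hplin]; exact det_ne_zero_of_injective' _ (hinj t ht)
  set q : ℝ → ℝ := fun s => ((1 : Matrix (Fin n) (Fin n) ℝ) - s • A).det with hq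
  have hqc : Continuous q :=
    Continuous.matrix_det (continuous_const.sub (continuous_id.smul continuous_const))
  have hqlin : ∀ s : ℝ, q s = LinearMap.det ((LinearMap.id : E →ₗ[ℝ] E) - s • Tm) := by
    intro s
    rw [← LinearMap.det_toMatrix b, map_sub, map_smul, LinearMap.toMatrix_id, ← hA]
  have hqne : ∀ s : ℝ, 0 ≤ s → s < 1 → q s ≠ 0 := by
    intro s hs0 hs1
    rw [hqlin]
    apply det_ne_zero_of_injective'
    rw [← LinearMap.ker_eq_bot, LinearMap.ker_eq_bot']
    intro x hx
    simp only [LinearMap.sub_apply, LinearMap.smul_apply, LinearMap.id_apply, sub_eq_zero] at hx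
    by_contra hx0
    have hnorm : ‖Tm x‖ = ‖x‖ := by rw [hTapp]; exact T.norm_map x
    have h3 : ‖x‖ = s * ‖x‖ := by
      conv_lhs => rw [hx]
      rw [norm_smul, Real.norm_eq_abs, abs_of_nonneg hs0, hnorm]
    have hxne : 0 < ‖x‖ := norm_pos_iff.mpr hx0
    nlinarith
  have hq0 : q 0 = 1 := by simp [hq]
  have hqhalf : 0 < q (1/2) := by
    rcases lt_or_ge 0 (q (1/2)) with h | h
    · exact h
    exfalso
    have hlt : q (1/2) < 0 := lt_of_le_of_ne h (hqne (1/2) (by norm_num) (by norm_num))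
    have hIV := intermediate_value_Icc' (by norm_num : (0:ℝ) ≤ 1/2) hqc.continuousOn
    obtain ⟨c, hc, hqc0⟩ := hIV ⟨le_of_lt hlt, by rw [hq0]; norm_num⟩
    exact hqne c hc.1 (lt_of_le_of_lt hc.2 (by norm_num)) hqc0
  have hp2 : 0 < p 2 := by
    have key : p 2 = (2:ℝ)^n * q (1/2) := by
      have h4 : (2:ℝ) • ((1 : Matrix (Fin n) (Fin n) ℝ) - (1/2 : ℝ) • A)
          = (2:ℝ) • (1 : Matrix (Fin n) (Fin n) ℝ) - A := by
        rw [smul_sub, smul_smul]; norm_num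
      rw [hp, hq]
      simp only
      rw [← h4, Matrix.det_smul, Fintype.card_fin]
    rw [key]
    positivity
  have hp0 : 0 < p 0 := by
    rcases lt_or_ge 0 (p 0) with h | h
    · exact h
    exfalso
    have hlt : p 0 < 0 := lt_of_le_of_ne h (hpne 0 le_rfl)
    have hIV := intermediate_value_Icc (by norm_num : (0:ℝ) ≤ 2) hpc.continuousOn
    obtain ⟨c, hc, hpc0⟩ := hIV ⟨le_of_lt hlt, le_of_lt hp2⟩
    exact hpne c hc.1 hpc0
  have hfin : p 0 = (-1:ℝ)^n * LinearMap.det Tm := by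
    rw [hp]
    simp only [zero_smul, zero_sub, Matrix.det_neg, Fintype.card_fin]
    rw [hA, LinearMap.det_toMatrix]
  rwa [hfin] at hp0

/-- for an orthogonal transformation `L` of a finite-dimensional
real inner product space, the codimension of the fixed-point space
`ker (L - id)` is even if `det L = 1` and odd if `det L = -1`. -/
theorem orthogonal_fixed_space_codim_parity
    {E : Type*} [NormedAddCommGroup E] [InnerProductSpace ℝ E]
    [FiniteDimensional ℝ E] (L : E ≃ₗᵢ[ℝ] E) :
    (LinearMap.det (L.toLinearEquiv : E →ₗ[ℝ] E) = 1 →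
      Even (finrank ℝ E -
        finrank ℝ (LinearMap.ker ((L.toLinearEquiv : E →ₗ[ℝ] E) - LinearMap.id)))) ∧
    (LinearMap.det (L.toLinearEquiv : E →ₗ[ℝ] E) = -1 →
      Odd (finrank ℝ E -
        finrank ℝ (LinearMap.ker ((L.toLinearEquiv : E →ₗ[ℝ] E) - LinearMap.id)))) := by
  set Lm : E →ₗ[ℝ] E := (L.toLinearEquiv : E →ₗ[ℝ] E) with hLm
  set K := LinearMap.ker (Lm - LinearMap.id) with hK
  have hLmapp : ∀ x, Lm x = L x := fun _ => rfl
  have hmemK : ∀ x, x ∈ K ↔ L x = x := by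
    intro x
    rw [hK, LinearMap.mem_ker, LinearMap.sub_apply, LinearMap.id_apply, sub_eq_zero, hLmapp]
  have hLKperp : ∀ x ∈ Kᗮ, L x ∈ Kᗮ := by
    intro x hx
    rw [Submodule.mem_orthogonal]
    intro u hu
    have h1 : L u = u := (hmemK u).mp hu
    calc inner ℝ u (L x) = inner ℝ (L u) (L x) := by rw [h1]
    _ = (inner ℝ u x : ℝ) := L.inner_map_map u x
    _ = 0 := (Submodule.mem_orthogonal K x).mp hx u hu
  set S : E ≃ₗᵢ[ℝ] E := (Submodule.reflection Kᗮ).trans L with hS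
  have hSfix : ∀ x, S x = x → x = 0 := by
    intro x hx
    obtain ⟨k, hk, f, hf, rfl⟩ := K.exists_add_mem_mem_orthogonal x
    have hrk : Submodule.reflection Kᗮ k = -k :=
      Submodule.reflection_mem_subspace_orthogonalComplement_eq_neg (K.le_orthogonal_orthogonal hk)
    have hrf : Submodule.reflection Kᗮ f = f := Submodule.reflection_mem_subspace_eq_self hf
    have hx' : L (-k) + L f = k + f := by
      rw [← map_add]
      calc L (-k + f) = S (k + f) := by
            rw [hS]; simp only [LinearIsometryEquiv.trans_apply, map_add, hrk, hrf]
      _ = k + f := hx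
    have hLk : L k = k := (hmemK k).mp hk
    have h1 : L f - f = k + k := by
      rw [map_neg, hLk] at hx'
      have := hx'
      abel_nf at this ⊢
      linear_combination (norm := module) this
    have hmem1 : L f - f ∈ Kᗮ := Kᗮ.sub_mem (hLKperp f hf) hf
    have hmem2 : k + k ∈ K ⊓ Kᗮ := ⟨K.add_mem hk hk, h1 ▸ hmem1⟩
    rw [K.inf_orthogonal_eq_bot, Submodule.mem_bot] at hmem2
    have hk0 : k = 0 := by
      have h2 : (2:ℝ) • k = 0 := by rw [two_smul]; exact hmem2
      simpa using (smul_eq_zero.mp h2).resolve_left (by norm_num)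
    have hLf : L f = f := by
      have := h1
      rw [hmem2, sub_eq_zero] at this
      exact this
    have hf0 : f = 0 := by
      have hfK : f ∈ K := (hmemK f).mpr hLf
      have : f ∈ K ⊓ Kᗮ := ⟨hfK, hf⟩
      rwa [K.inf_orthogonal_eq_bot, Submodule.mem_bot] at this
    rw [hk0, hf0, add_zero]
  have hdetS : LinearMap.det (S.toLinearEquiv : E →ₗ[ℝ] E)
      = (-1:ℝ)^(finrank ℝ K) * LinearMap.det Lm := by
    have hcomp : (S.toLinearEquiv : E →ₗ[ℝ] E)
        = Lm ∘ₗ ((Submodule.reflection Kᗮ).toLinearEquiv : E →ₗ[ℝ] E) := by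
      ext x; rfl
    rw [hcomp, LinearMap.det_comp]
    have : LinearMap.det ((Submodule.reflection Kᗮ).toLinearEquiv : E →ₗ[ℝ] E) = (-1:ℝ)^(finrank ℝ K) := by
      have h5 := Submodule.det_reflection (𝕜 := ℝ) (Kᗮ)
      rw [Submodule.orthogonal_orthogonal] at h5
      exact h5
    rw [this, mul_comm]
  have hpos := isometry_neg_one_pow_det_pos S hSfix
  rw [hdetS] at hpos
  set n := finrank ℝ E with hn
  set d := finrank ℝ K with hd
  have hdn : d ≤ n := Submodule.finrank_le K
  constructor
  · intro h1
    rw [h1, mul_one, ← pow_add] at hpos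
    have heven : Even (n + d) := by
      by_contra hodd
      rw [Nat.not_even_iff_odd] at hodd
      rw [hodd.neg_one_pow] at hpos
      linarith
    rw [Nat.even_sub hdn]
    rw [Nat.even_add] at heven
    exact heven
  · intro h1
    rw [h1] at hpos
    have hodd : Odd (n + d) := by
      by_contra he
      rw [Nat.not_odd_iff_even] at he
      have : (-1:ℝ)^n * ((-1:ℝ)^d * -1) = -((-1:ℝ)^(n+d)) := by rw [pow_add]; ring
      rw [this, he.neg_one_pow] at hpos
      linarith
    rw [Nat.odd_sub hdn]
    rw [Nat.odd_add] at hodd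
    exact hodd
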